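/- Let Aut^M(M ⋊ N) be the group of automorphisms of M ⋊ N mapping M to itself. Every such automorphism has the form (m,n) ↦ (σ(m) + d(n), φ(n)) where (σ,φ) ∈ Aut(N,M) and d ∘ φ⁻¹ ∈ Der(N,M), and there is a split exact sequence 0 → Der(N,M) → Aut^M(M ⋊ N) → Aut(N,M) → 1, where the kernel map sends a derivation d to the automorphism (m,n) ↦ (m + d(n), n). -/

import Mathlib

/-- A derivation `d : N → M` (multiplicative notation): `d(nn') = d(n) · n·d(n')`. -/
def IsDerivation {M N : Type*} [CommGroup M] [Group N] (φ : N →* MulAut M) (d : N → M) : Prop :=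
  ∀ n n' : N, d (n * n') = d n * φ n (d n')


open SemidirectProduct in
/-- kernel map: `d ↦ ((m,n) ↦ (m·d(n), n))`. -/
def derAut {M N : Type*} [CommGroup M] [Group N] (φ : N →* MulAut M) (d : N → M)
    (hd : IsDerivation φ d) : MulAut (M ⋊[φ] N) where
  toFun x := ⟨x.left * d x.right, x.right⟩
  invFun x := ⟨x.left * (d x.right)⁻¹, x.right⟩
  left_inv x := by ext <;> simp
  right_inv x := by ext <;> simp
  map_mul' a b := by
    ext
    · simp only [mul_left, mul_right, hd a.right b.right, map_mul]
      simp [mul_comm, mul_assoc, mul_left_comm]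
    · rfl

open SemidirectProduct in
/-- splitting: `(σ,ψ) ↦ ((m,n) ↦ (σ m, ψ n))`. -/
def pairAut {M N : Type*} [CommGroup M] [Group N] (φ : N →* MulAut M) (σ : MulAut M)
    (ψ : MulAut N) (h : ∀ (n : N) (m : M), σ (φ n m) = φ (ψ n) (σ m)) :
    MulAut (M ⋊[φ] N) where
  toFun x := ⟨σ x.left, ψ x.right⟩
  invFun x := ⟨σ.symm x.left, ψ.symm x.right⟩
  left_inv x := by ext <;> simp
  right_inv x := by ext <;> simp
  map_mul' a b := by
    ext
    · simp only [mul_left, map_mul, h]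
    · simp [mul_right]

open SemidirectProduct

/-- Every automorphism of `M ⋊ N` mapping `M` onto itself has the form
`(m,n) ↦ (σ(m) · d(n), ψ(n))` with `(σ,ψ) ∈ Aut(N,M)` a compatible pair and `d ∘ ψ⁻¹` a
derivation; and there is a split exact sequence
`0 → Der(N,M) → Aut^M(M ⋊ N) → Aut(N,M) → 1`, the kernel map sending a derivation `d` to
`(m,n) ↦ (m · d(n), n)`. -/
theorem autM_structure (M N : Type*) [CommGroup M] [Group N] (φ : N →* MulAut M) :
    (∀ F : MulAut (M ⋊[φ] N),
      (∀ m : M, (F (SemidirectProduct.inl m)).right = 1) →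
      (∀ m : M, ∃ m' : M, F (SemidirectProduct.inl m') = SemidirectProduct.inl m) →
      ∃ (σ : MulAut M) (ψ : MulAut N) (d : N → M),
        (∀ (n : N) (m : M), σ (φ n m) = φ (ψ n) (σ m)) ∧
        IsDerivation φ (fun n => d (ψ.symm n)) ∧
        (∀ x : M ⋊[φ] N, F x = ⟨σ x.left * d x.right, ψ x.right⟩)) ∧
    (∀ d : N → M, IsDerivation φ d →
      ∃ F : MulAut (M ⋊[φ] N), ∀ x : M ⋊[φ] N, F x = ⟨x.left * d x.right, x.right⟩) ∧
    (∀ (σ : MulAut M) (ψ : MulAut N), (∀ (n : N) (m : M), σ (φ n m) = φ (ψ n) (σ m)) →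
      ∃ F : MulAut (M ⋊[φ] N), ∀ x : M ⋊[φ] N, F x = ⟨σ x.left, ψ x.right⟩) ∧
    (∀ F : MulAut (M ⋊[φ] N),
      (∀ x : M ⋊[φ] N, (F x).right = x.right) →
      (∀ m : M, F (SemidirectProduct.inl m) = SemidirectProduct.inl m) →
      ∃ d : N → M, IsDerivation φ d ∧
        ∀ x : M ⋊[φ] N, F x = ⟨x.left * d x.right, x.right⟩) := by
  refine ⟨?_, ?_, ?_, ?_⟩
  · intro F h1 h2
    have hFinl : ∀ m : M, F (inl m) = inl ((F (inl m)).left) := by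
      intro m; ext
      · rfl
      · simp [h1 m]
    let σ0 : M →* M :=
      { toFun := fun m => (F (inl m)).left
        map_one' := by simp
        map_mul' := fun a b => by
          show (F (inl (a * b))).left = _
          rw [map_mul, map_mul, mul_left, h1 a]
          simp }
    have hσ0inj : Function.Injective σ0 := by
      intro a b hab
      have : F (inl a) = F (inl b) := by
        rw [hFinl a, hFinl b]; exact congrArg inl hab
      exact inl_injective (F.injective this)
    have hσ0surj : Function.Surjective σ0 := by
      intro m
      obtain ⟨m', hm'⟩ := h2 m
      exact ⟨m', by have := congrArg SemidirectProduct.left hm'; simp at this; exact this⟩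
    let σ : MulAut M := MulEquiv.ofBijective σ0 ⟨hσ0inj, hσ0surj⟩
    let ψ0 : N →* N :=
      { toFun := fun n => (F (inr n)).right
        map_one' := by simp
        map_mul' := fun a b => by
          show (F (inr (a * b))).right = _
          rw [map_mul, map_mul, mul_right] }
    let d : N → M := fun n => (F (inr n)).left
    have hFinr : ∀ n : N, F (inr n) = ⟨d n, ψ0 n⟩ := fun n => rfl
    have hψ0inj : Function.Injective ψ0 := by
      intro a b hab
      have hc : (F (inr (a * b⁻¹))).right = 1 := by
        show ψ0 (a * b⁻¹) = 1
        rw [map_mul, map_inv]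
        simp [hab]
      obtain ⟨m', hm'⟩ := h2 ((F (inr (a * b⁻¹))).left)
      have hceq : F (inr (a * b⁻¹)) = F (inl m') := by
        rw [hm']; ext
        · rfl
        · simpa using hc
      have := F.injective hceq
      have hr := congrArg SemidirectProduct.right this
      simp only [right_inr, right_inl] at hr
      exact mul_inv_eq_one.mp hr
    have hψ0surj : Function.Surjective ψ0 := by
      intro n
      refine ⟨(F.symm (inr n)).right, ?_⟩
      have : F (F.symm (inr n)) = inr n := F.apply_symm_apply _
      rw [← inl_left_mul_inr_right (F.symm (inr n)), map_mul] at this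
      have hr := congrArg SemidirectProduct.right this
      rw [mul_right, h1] at hr
      simp at hr; exact hr
    let ψ : MulAut N := MulEquiv.ofBijective ψ0 ⟨hψ0inj, hψ0surj⟩
    have hFx : ∀ x : M ⋊[φ] N, F x = ⟨σ0 x.left * d x.right, ψ0 x.right⟩ := by
      intro x
      conv_lhs => rw [← inl_left_mul_inr_right x, map_mul, hFinl, hFinr]
      ext
      · rw [mul_left]
        simp only [left_inl, right_inl, map_one, MulAut.one_apply]
        rfl
      · rw [mul_right]
        simp only [right_inl, one_mul]
    have hder : ∀ a b : N, d (a * b) = d a * φ (ψ0 a) (d b) := by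
      intro a b
      have : F (inr (a * b)) = F (inr a) * F (inr b) := by rw [map_mul, map_mul]
      have hl := congrArg SemidirectProduct.left this
      rw [hFinr, hFinr, hFinr, mul_left] at hl
      exact hl
    have hcompat : ∀ (n : N) (m : M), σ0 (φ n m) = φ (ψ0 n) (σ0 m) := by
      intro n m
      have h3 : F (inl (φ n m) * inr n) = F (inr n * inl m) := by
        congr 1
        ext
        · simp [mul_left]
        · simp [mul_right]
      rw [map_mul, map_mul, hFinl (φ n m), hFinl m, hFinr n] at h3
      have hl := congrArg SemidirectProduct.left h3
      simp only [mul_left, left_inl, right_inl, map_one, MulAut.one_apply] at hl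
      rw [mul_comm (d n)] at hl
      exact mul_right_cancel hl
    refine ⟨σ, ψ, d, hcompat, ?_, hFx⟩
    intro n n'
    show d (ψ.symm (n * n')) = d (ψ.symm n) * φ n (d (ψ.symm n'))
    rw [map_mul, hder]
    have hs : ψ0 (ψ.symm n) = n := ψ.apply_symm_apply n
    rw [hs]
  · intro d hd
    exact ⟨derAut φ d hd, fun x => rfl⟩
  · intro σ ψ h
    exact ⟨pairAut φ σ ψ h, fun x => rfl⟩
  · intro F h1 h2
    refine ⟨fun n => (F (inr n)).left, ?_, ?_⟩
    · intro n n'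
      have : F (inr (n * n')) = F (inr n) * F (inr n') := by
        rw [map_mul, map_mul]
      have hl := congrArg SemidirectProduct.left this
      rw [mul_left] at hl
      simp only [h1 (inr n)] at hl; exact hl
    · intro x
      have : F x = F (inl x.left) * F (inr x.right) := by
        rw [← map_mul, inl_left_mul_inr_right]
      rw [this, h2 x.left]
      ext
      · rw [mul_left]; simp
      · rw [mul_right]; simp [h1 (inr x.right)]
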